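/- arXiv:1304.8083 — 3 statements merged into one kernel-verified Lean document; each statement's English description precedes it below -/
import Mathlib

section
/- Let L : N -> R with L(t) >= 0 for all t, let u, ustar : N -> R, let K be a real number and V > 0 a real number, and suppose that L(t+1) - L(t) - V * u(t) <= K - V * ustar(t) for all t. Then for every integer T >= 1, (1/T) * sum_{t=0}^{T-1} u(t) >= (1/T) * sum_{t=0}^{T-1} ustar(t) - K/V - L(0)/(V*T). -/
open Finset in
theorem drift_plus_penalty_comparison (L u ustar : ℕ → ℝ) (hL : ∀ t, 0 ≤ L t)
    (K V : ℝ) (hV : 0 < V)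
    (hdpp : ∀ t, L (t + 1) - L t - V * u t ≤ K - V * ustar t) :
    ∀ T : ℕ, 1 ≤ T →
      (1 / (T : ℝ)) * ∑ t ∈ Finset.range T, u t
        ≥ (1 / (T : ℝ)) * ∑ t ∈ Finset.range T, ustar t - K / V - L 0 / (V * T) := by
  intro T hT
  have hTpos : (0:ℝ) < T := by exact_mod_cast hT
  have hsum : ∑ t ∈ Finset.range T, (L (t+1) - L t - V * u t)
      ≤ ∑ t ∈ Finset.range T, (K - V * ustar t) :=
    Finset.sum_le_sum fun t _ => hdpp t
  have htel : ∑ t ∈ Finset.range T, (L (t+1) - L t) = L T - L 0 :=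
    Finset.sum_range_sub L T
  rw [Finset.sum_sub_distrib, htel, ← Finset.mul_sum, Finset.sum_sub_distrib,
    Finset.sum_const, Finset.card_range, ← Finset.mul_sum, nsmul_eq_mul] at hsum
  have key : V * ∑ t ∈ Finset.range T, ustar t - T * K - L 0
      ≤ V * ∑ t ∈ Finset.range T, u t := by
    have := hL T; linarith
  rw [ge_iff_le, ← sub_nonneg]
  have hVT : (0:ℝ) < V * T := mul_pos hV hTpos
  have h1 : (V * ∑ t ∈ Finset.range T, ustar t - ↑T * K - L 0) / (V * T)
      ≤ (V * ∑ t ∈ Finset.range T, u t) / (V * T) :=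
    (div_le_div_iff_of_pos_right hVT).2 key
  have h2 := sub_nonneg.2 h1
  have heq : (V * ∑ t ∈ Finset.range T, u t) / (V * T)
      - (V * ∑ t ∈ Finset.range T, ustar t - ↑T * K - L 0) / (V * T)
      = 1 / ↑T * ∑ t ∈ Finset.range T, u t -
        (1 / ↑T * ∑ t ∈ Finset.range T, ustar t - K / V - L 0 / (V * ↑T)) := by
    field_simp
  linarith
end

section
/- Let n be a natural number, kappa >= 0 a real number, s and T natural numbers, and let x : N -> Fin n -> R and a : N -> Fin n -> R be such that |x_i(t+1) - x_i(t)| <= kappa for all i and t, and |a_i(tau)| <= 2*kappa for all i and tau. Then sum_{tau=s}^{s+T-1} sum_{i} a_i(tau) * x_i(tau) <= sum_{i} ( sum_{tau=s}^{s+T-1} a_i(tau) ) * x_i(s) + kappa^2 * n * T * (T-1). -/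
open Finset in
theorem frame_summation_bound (n : ℕ) (kappa : ℝ) (hkappa : 0 ≤ kappa) (s T : ℕ)
    (x a : ℕ → Fin n → ℝ)
    (hx : ∀ i t, |x (t + 1) i - x t i| ≤ kappa)
    (ha : ∀ i tau, |a tau i| ≤ 2 * kappa) :
    ∑ tau ∈ Finset.Ico s (s + T), ∑ i, a tau i * x tau i
      ≤ ∑ i, (∑ tau ∈ Finset.Ico s (s + T), a tau i) * x s i
        + kappa ^ 2 * n * T * (T - 1) := by
  have hdiff : ∀ (i : Fin n) (t : ℕ), |x (s + t) i - x s i| ≤ kappa * t := by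
    intro i t
    induction t with
    | zero => simp
    | succ t ih =>
      have h1 := hx i (s + t)
      have : |x (s + (t + 1)) i - x s i| ≤ kappa + kappa * t := by
        calc |x (s + (t + 1)) i - x s i|
            ≤ |x (s + t + 1) i - x (s + t) i| + |x (s + t) i - x s i| := by
              rw [show s + (t + 1) = s + t + 1 from rfl]; exact abs_sub_le _ _ _
          _ ≤ kappa + kappa * t := add_le_add h1 ih
      calc |x (s + (t + 1)) i - x s i| ≤ kappa + kappa * t := this
        _ = kappa * ((t : ℝ) + 1) := by ring
        _ = kappa * ((t : ℕ) + 1 : ℕ) := by push_cast; ring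
  -- rewrite RHS first term
  have hswap : ∑ i, (∑ tau ∈ Finset.Ico s (s + T), a tau i) * x s i
      = ∑ tau ∈ Finset.Ico s (s + T), ∑ i, a tau i * x s i := by
    rw [Finset.sum_comm]
    congr 1; ext tau; rw [Finset.sum_mul]
  rw [hswap, ← sub_le_iff_le_add', ← Finset.sum_sub_distrib]
  have key : ∀ tau ∈ Finset.Ico s (s + T),
      (∑ i, a tau i * x tau i) - (∑ i, a tau i * x s i)
        ≤ 2 * kappa ^ 2 * n * (tau - s : ℕ) := by
    intro tau htau
    rw [← Finset.sum_sub_distrib]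
    have hts : s + (tau - s) = tau := by
      rw [Finset.mem_Ico] at htau; omega
    calc ∑ i, (a tau i * x tau i - a tau i * x s i)
        ≤ ∑ i : Fin n, 2 * kappa * (kappa * (tau - s : ℕ)) := by
          apply Finset.sum_le_sum
          intro i _
          have : a tau i * x tau i - a tau i * x s i = a tau i * (x tau i - x s i) := by ring
          rw [this]
          calc a tau i * (x tau i - x s i) ≤ |a tau i * (x tau i - x s i)| := le_abs_self _
            _ = |a tau i| * |x tau i - x s i| := abs_mul _ _
            _ ≤ (2 * kappa) * (kappa * (tau - s : ℕ)) := by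
                apply mul_le_mul (ha i tau) ?_ (abs_nonneg _)
                  (by positivity)
                have := hdiff i (tau - s)
                rwa [hts] at this
      _ = 2 * kappa ^ 2 * n * (tau - s : ℕ) := by
          rw [Finset.sum_const, Finset.card_univ, Fintype.card_fin]
          push_cast; ring
  calc ∑ tau ∈ Finset.Ico s (s + T), ((∑ i, a tau i * x tau i) - ∑ i, a tau i * x s i)
      ≤ ∑ tau ∈ Finset.Ico s (s + T), 2 * kappa ^ 2 * n * ((tau - s : ℕ) : ℝ) :=
        Finset.sum_le_sum key
    _ = 2 * kappa ^ 2 * n * ∑ k ∈ Finset.range T, (k : ℝ) := by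
        rw [← Finset.mul_sum, Finset.sum_Ico_eq_sum_range]
        congr 1
        have hT : s + T - s = T := by omega
        rw [hT]
        apply Finset.sum_congr rfl
        intro k _
        congr 1
        omega
    _ ≤ kappa ^ 2 * n * T * (T - 1) := by
        have hsum : (∑ k ∈ Finset.range T, (k : ℝ)) * 2 = T * ((T : ℝ) - 1) := by
          rcases T with _ | t
          · simp
          · have h := Finset.sum_range_id_mul_two (t + 1)
            have : ((∑ i ∈ Finset.range (t + 1), i : ℕ) : ℝ) * 2 = ((t + 1) * t : ℕ) := by
              exact_mod_cast congrArg (Nat.cast : ℕ → ℝ) h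
            push_cast at this ⊢
            linarith
        refine le_of_eq ?_
        calc 2 * kappa ^ 2 * (n:ℝ) * ∑ k ∈ Finset.range T, (k : ℝ)
            = kappa ^ 2 * n * ((∑ k ∈ Finset.range T, (k : ℝ)) * 2) := by ring
          _ = kappa ^ 2 * n * ((T:ℝ) * ((T:ℝ) - 1)) := by rw [hsum]
          _ = kappa ^ 2 * n * T * ((T:ℝ) - 1) := by ring
end

section
/- Let Theta : N -> R with Theta(t) >= 0 for all t, and suppose there is a real kappa >= 0 with |Theta(t+1) - Theta(t)| <= kappa for all t, and that limsup_{t -> infinity} (1/t) * sum_{tau=0}^{t-1} Theta(tau) < infinity. Then lim_{t -> infinity} Theta(t)/t = 0. -/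
open Finset Filter in
theorem strong_stability_implies_rate_stability (Theta : ℕ → ℝ)
    (hpos : ∀ t, 0 ≤ Theta t) (kappa : ℝ) (hkappa : 0 ≤ kappa)
    (hinc : ∀ t, |Theta (t + 1) - Theta t| ≤ kappa)
    (hbdd : Filter.IsBoundedUnder (· ≤ ·) Filter.atTop
      (fun t : ℕ => (1 / (t : ℝ)) * ∑ tau ∈ Finset.range t, Theta tau)) :
    Filter.Tendsto (fun t : ℕ => Theta t / t) Filter.atTop (nhds 0) := by
  set κ : ℝ := kappa + 1 with hκ
  have hκ1 : (1:ℝ) ≤ κ := by simp only [hκ]; linarith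
  have hκ0 : (0:ℝ) < κ := by linarith
  have hdec : ∀ t k : ℕ, Theta t - κ * k ≤ Theta (t + k) := by
    intro t k
    induction k with
    | zero => simp
    | succ k ih =>
      have h := abs_le.mp (hinc (t + k))
      rw [show t + (k+1) = t + k + 1 from rfl]
      push_cast
      push_cast at ih
      nlinarith [h.1, h.2]
  obtain ⟨M, hM⟩ := hbdd
  rw [eventually_map, eventually_atTop] at hM
  obtain ⟨t1, hM⟩ := hM
  set M' : ℝ := max M 0 with hM'
  have hM'0 : 0 ≤ M' := le_max_right _ _
  have hMM' : M ≤ M' := le_max_left _ _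
  have hsum : ∀ t : ℕ, max t1 1 ≤ t → ∑ tau ∈ range t, Theta tau ≤ M' * t := by
    intro t ht
    have h1 := hM t (le_trans (le_max_left _ _) ht)
    have ht1 : (1:ℝ) ≤ (t:ℝ) := by
      exact_mod_cast le_trans (le_max_right t1 1) ht
    have htpos : (0:ℝ) < t := by linarith
    rw [one_div, inv_mul_eq_div, div_le_iff₀ htpos] at h1
    nlinarith
  rw [Metric.tendsto_atTop]
  intro ε hε
  set C : ℝ := 4 * κ * M' * (2 + ε) / ε^2 with hC
  refine ⟨max (max t1 1) (⌈C⌉₊ + 1), fun t ht => ?_⟩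
  have ht1 : max t1 1 ≤ t := le_trans (le_max_left _ _) ht
  have htC : C < t := by
    have h2 : (⌈C⌉₊ + 1 : ℕ) ≤ t := le_trans (le_max_right _ _) ht
    have h3 : ((⌈C⌉₊ + 1 : ℕ) : ℝ) ≤ t := by exact_mod_cast h2
    push_cast at h3
    linarith [Nat.le_ceil C]
  have ht1' : (1:ℝ) ≤ (t:ℝ) := by
    exact_mod_cast le_trans (le_max_right t1 1) ht1
  have htpos : (0:ℝ) < t := by linarith
  have key : Theta t < ε * t := by
    by_contra hcon
    push_neg at hcon
    set n : ℕ := ⌊ε * t / (2 * κ)⌋₊ with hn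
    have hn1 : (n:ℝ) ≤ ε * t / (2 * κ) := Nat.floor_le (by positivity)
    have hn2 : ε * t / (2 * κ) < n + 1 := Nat.lt_floor_add_one _
    have hκn : κ * n ≤ ε * t / 2 := by
      have := mul_le_mul_of_nonneg_left hn1 hκ0.le
      calc κ * n ≤ κ * (ε * t / (2 * κ)) := this
        _ = ε * t / 2 := by field_simp
    have hterm : ∀ k ∈ range (n+1), ε * t / 2 ≤ Theta (t + k) := by
      intro k hk
      have hkn : (k:ℝ) ≤ n := by
        exact_mod_cast Nat.lt_succ_iff.mp (mem_range.mp hk)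
      have h1 := hdec t k
      have h2 : κ * k ≤ κ * n := mul_le_mul_of_nonneg_left hkn hκ0.le
      nlinarith [hcon, h1, h2, hκn]
    have hsplit : ∑ tau ∈ range (t + (n+1)), Theta tau
        = ∑ tau ∈ range t, Theta tau + ∑ k ∈ range (n+1), Theta (t + k) :=
      Finset.sum_range_add Theta t (n+1)
    have hlow : ((n:ℝ)+1) * (ε * t / 2) ≤ ∑ k ∈ range (n+1), Theta (t + k) := by
      calc ((n:ℝ)+1) * (ε * t / 2)
          = ∑ _k ∈ range (n+1), (ε * t / 2) := by
            rw [Finset.sum_const, card_range]; push_cast; ring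
        _ ≤ _ := Finset.sum_le_sum hterm
    have hnonneg : 0 ≤ ∑ tau ∈ range t, Theta tau :=
      Finset.sum_nonneg fun i _ => hpos i
    have hup : ∑ tau ∈ range (t + (n+1)), Theta tau ≤ M' * ((t:ℝ) + ((n:ℝ)+1)) := by
      have h := hsum (t + (n+1)) (le_trans ht1 (Nat.le_add_right _ _))
      push_cast at h
      linarith
    -- combine
    have hmain : ((n:ℝ)+1) * (ε * t / 2) ≤ M' * ((t:ℝ) + ((n:ℝ)+1)) := by
      rw [hsplit] at hup
      linarith
    -- lower bound on LHS, upper bound on RHS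
    have hlb : ε^2 * t^2 / (4 * κ) < ((n:ℝ)+1) * (ε * t / 2) := by
      have hεt : 0 < ε * t / 2 := by positivity
      have := mul_lt_mul_of_pos_right hn2 hεt
      calc ε^2 * t^2 / (4 * κ) = (ε * t / (2 * κ)) * (ε * t / 2) := by
            field_simp; ring
        _ < _ := this
    have hub : M' * ((t:ℝ) + ((n:ℝ)+1)) ≤ M' * ((2 + ε) * t) := by
      apply mul_le_mul_of_nonneg_left _ hM'0
      have h1 : (n:ℝ) + 1 ≤ ε * t / 2 + 1 := by
        have : ε * t / (2 * κ) ≤ ε * t / 2 := by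
          apply div_le_div_of_nonneg_left (by positivity) (by linarith) (by linarith)
        linarith
      linarith
    have hfinal : ε^2 * t^2 / (4 * κ) < M' * ((2 + ε) * t) := by linarith
    rw [div_lt_iff₀ (by positivity)] at hfinal
    rw [hC, div_lt_iff₀ (by positivity)] at htC
    nlinarith [htpos, hε, hκ0, hM'0]
  rw [Real.dist_eq, sub_zero, abs_of_nonneg (div_nonneg (hpos t) htpos.le),
    div_lt_iff₀ htpos]
  linarith
end
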